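/- Lower bound forcing existence of t_cr: let A₁, A₂ : [0,∞) → ℝ be continuous with A₁(t) ∈ [α₁,β₁] and A₂(t) ∈ [α₂,β₂] where 0 < αᵢ ≤ βᵢ, and let ρ solve ρ'(t) = A₁(t) − A₂(t)ρ(t), ρ(0)=ρ₀ ≥ 0. Then limsup_{t→∞} ρ(t) ≥ α₁/β₂; in particular, if ρ_cr < α₁/β₂ and ρ₀ < ρ_cr, there exists a finite t_cr > 0 with ρ(t_cr) = ρ_cr. -/

import Mathlib

open Set intervalIntegral

/-- Lower bound forcing existence of t_cr: for ρ' = A₁(t) - A₂(t)ρ with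
0 < α₁ ≤ A₁ ≤ β₁, 0 < α₂ ≤ A₂ ≤ β₂, we have limsup_{t→∞} ρ(t) ≥ α₁/β₂; in particular if
0 ≤ ρ₀ < ρ_cr < α₁/β₂ there is t_cr > 0 with ρ(t_cr) = ρ_cr. -/
theorem stmt_19 (α₁ β₁ α₂ β₂ ρ₀ ρcr : ℝ)
    (hα₁ : 0 < α₁) (h₁ : α₁ ≤ β₁) (hα₂ : 0 < α₂) (h₂ : α₂ ≤ β₂)
    (A₁ A₂ : ℝ → ℝ) (hA₁_cont : Continuous A₁) (hA₂_cont : Continuous A₂)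
    (hA₁_bd : ∀ t ≥ (0:ℝ), α₁ ≤ A₁ t ∧ A₁ t ≤ β₁)
    (hA₂_bd : ∀ t ≥ (0:ℝ), α₂ ≤ A₂ t ∧ A₂ t ≤ β₂)
    (ρ : ℝ → ℝ) (hρ0 : ρ 0 = ρ₀) (hρ₀_nonneg : 0 ≤ ρ₀)
    (hρ : ∀ t ≥ (0:ℝ), HasDerivAt ρ (A₁ t - A₂ t * ρ t) t)
    (hρ_formula : ∀ t ≥ (0:ℝ), ρ t = Real.exp (-(∫ s in (0:ℝ)..t, A₂ s)) *
        (ρ₀ + ∫ s in (0:ℝ)..t, Real.exp (∫ u in (0:ℝ)..s, A₂ u) * A₁ s))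
    (hρcr : ρ₀ < ρcr) (hρcr2 : ρcr < α₁ / β₂) :
    α₁ / β₂ ≤ Filter.limsup ρ Filter.atTop ∧ ∃ tcr > (0:ℝ), ρ tcr = ρcr := by
  have hβ₂ : 0 < β₂ := lt_of_lt_of_le hα₂ h₂
  set c : ℝ := α₁ / β₂ with hc
  have hc_pos : 0 < c := div_pos hα₁ hβ₂
  set I : ℝ → ℝ := fun t => ∫ s in (0:ℝ)..t, A₂ s with hI
  have hIderiv : ∀ t : ℝ, HasDerivAt I (A₂ t) t := fun t =>
    (hA₂_cont.integral_hasStrictDerivAt 0 t).hasDerivAt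
  have hIcont : Continuous I :=
    continuous_iff_continuousAt.2 fun t => (hIderiv t).continuousAt
  set E : ℝ → ℝ := fun t => Real.exp (I t) with hE
  have hEderiv : ∀ t : ℝ, HasDerivAt E (E t * A₂ t) t := fun t => (hIderiv t).exp
  have hEcont : Continuous E := Real.continuous_exp.comp hIcont
  have hEpos : ∀ t, 0 < E t := fun t => Real.exp_pos _
  -- key integral identity
  have key : ∀ t : ℝ, (∫ s in (0:ℝ)..t, E s * A₂ s) = E t - 1 := by
    intro t
    have h := intervalIntegral.integral_eq_sub_of_hasDerivAt
      (f := E) (f' := fun s => E s * A₂ s) (a := 0) (b := t)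
      (fun s _ => hEderiv s) ((hEcont.mul hA₂_cont).intervalIntegrable 0 t)
    have hE0 : E 0 = 1 := by simp [hE, hI]
    rw [h, hE0]
  have hInonneg : ∀ t ≥ (0:ℝ), α₂ * t ≤ I t := by
    intro t ht
    have : (∫ s in (0:ℝ)..t, α₂) ≤ I t := by
      apply intervalIntegral.integral_mono_on ht
        (intervalIntegrable_const) (hA₂_cont.intervalIntegrable 0 t)
      intro s hs
      exact (hA₂_bd s hs.1).1
    simpa [mul_comm] using this
  -- lower bound for ρ
  have hlow : ∀ t ≥ (0:ℝ), c * (1 - Real.exp (-(α₂ * t))) ≤ ρ t := by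
    intro t ht
    have hIt : α₂ * t ≤ I t := hInonneg t ht
    have hint : c * (E t - 1) ≤ ∫ s in (0:ℝ)..t, E s * A₁ s := by
      have h1 : (∫ s in (0:ℝ)..t, c * (E s * A₂ s)) ≤ ∫ s in (0:ℝ)..t, E s * A₁ s := by
        apply intervalIntegral.integral_mono_on ht
          ((continuous_const.mul (hEcont.mul hA₂_cont)).intervalIntegrable 0 t)
          ((hEcont.mul hA₁_cont).intervalIntegrable 0 t)
        intro s hs
        have hA1 : α₁ ≤ A₁ s := (hA₁_bd s hs.1).1
        have hA2 : A₂ s ≤ β₂ := (hA₂_bd s hs.1).2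
        have hcb : c * A₂ s ≤ α₁ := by
          calc c * A₂ s ≤ c * β₂ := by nlinarith
            _ = α₁ := by rw [hc]; field_simp
        show c * (E s * A₂ s) ≤ E s * A₁ s
        nlinarith [hEpos s]
      rw [intervalIntegral.integral_const_mul, key t] at h1
      exact h1
    have hρt := hρ_formula t ht
    have hexp : Real.exp (-(I t)) * E t = 1 := by
      rw [hE, ← Real.exp_add]; simp
    have hep : 0 < Real.exp (-(I t)) := Real.exp_pos _
    have h3 : Real.exp (-(I t)) * (ρ₀ + c * (E t - 1)) ≤ ρ t := by
      rw [hρt]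
      apply mul_le_mul_of_nonneg_left _ hep.le
      linarith [hint]
    have h4 : c * (1 - Real.exp (-(I t))) ≤ ρ t := by
      have expand : Real.exp (-(I t)) * (ρ₀ + c * (E t - 1))
          = Real.exp (-(I t)) * ρ₀ + c * (Real.exp (-(I t)) * E t) - c * Real.exp (-(I t)) := by
        ring
      rw [expand, hexp] at h3
      nlinarith
    have hmono : Real.exp (-(I t)) ≤ Real.exp (-(α₂ * t)) := by
      apply Real.exp_le_exp.2; linarith
    nlinarith
  -- upper bound for ρ
  have hup : ∀ t ≥ (0:ℝ), ρ t ≤ ρ₀ + β₁ / α₂ := by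
    intro t ht
    have hIt : 0 ≤ I t := le_trans (by positivity) (hInonneg t ht)
    have hint : (∫ s in (0:ℝ)..t, E s * A₁ s) ≤ (β₁ / α₂) * (E t - 1) := by
      have h1 : (∫ s in (0:ℝ)..t, E s * A₁ s) ≤ ∫ s in (0:ℝ)..t, (β₁/α₂) * (E s * A₂ s) := by
        apply intervalIntegral.integral_mono_on ht
          ((hEcont.mul hA₁_cont).intervalIntegrable 0 t)
          ((continuous_const.mul (hEcont.mul hA₂_cont)).intervalIntegrable 0 t)
        intro s hs
        have hA1 : A₁ s ≤ β₁ := (hA₁_bd s hs.1).2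
        have hA2 : α₂ ≤ A₂ s := (hA₂_bd s hs.1).1
        have : β₁ ≤ (β₁/α₂) * A₂ s := by
          rw [div_mul_eq_mul_div, le_div_iff₀ hα₂]; nlinarith
        show E s * A₁ s ≤ (β₁/α₂) * (E s * A₂ s)
        nlinarith [hEpos s]
      rwa [intervalIntegral.integral_const_mul, key t] at h1
    have hρt := hρ_formula t ht
    have hexp : Real.exp (-(I t)) * E t = 1 := by
      rw [hE, ← Real.exp_add]; simp
    have hep : 0 < Real.exp (-(I t)) := Real.exp_pos _
    have hep1 : Real.exp (-(I t)) ≤ 1 := Real.exp_le_one_iff.2 (by linarith)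
    have hba : 0 < β₁ / α₂ := div_pos (lt_of_lt_of_le hα₁ h₁) hα₂
    rw [hρt]
    have : Real.exp (-(I t)) * (ρ₀ + ∫ s in (0:ℝ)..t, E s * A₁ s)
        ≤ Real.exp (-(I t)) * (ρ₀ + (β₁/α₂) * (E t - 1)) := by
      apply mul_le_mul_of_nonneg_left _ hep.le; linarith
    refine this.trans ?_
    have expand : Real.exp (-(I t)) * (ρ₀ + (β₁/α₂) * (E t - 1))
        = Real.exp (-(I t)) * ρ₀ + (β₁/α₂) * (Real.exp (-(I t)) * E t)
          - (β₁/α₂) * Real.exp (-(I t)) := by ring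
    rw [expand, hexp]
    nlinarith
  -- eventual bounds
  have hlow' : ∀ᶠ t in Filter.atTop, c * (1 - Real.exp (-(α₂ * t))) ≤ ρ t :=
    Filter.eventually_atTop.2 ⟨0, fun t ht => hlow t ht⟩
  have hup' : ∀ᶠ t in Filter.atTop, ρ t ≤ ρ₀ + β₁ / α₂ :=
    Filter.eventually_atTop.2 ⟨0, fun t ht => hup t ht⟩
  have hlow0 : ∀ᶠ t in Filter.atTop, (0:ℝ) ≤ ρ t := by
    filter_upwards [hlow', Filter.eventually_ge_atTop (0:ℝ)] with t h1 h2
    have : Real.exp (-(α₂ * t)) ≤ 1 := Real.exp_le_one_iff.2 (by nlinarith)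
    nlinarith
  have hbd_le : Filter.IsBoundedUnder (· ≤ ·) Filter.atTop ρ :=
    Filter.isBoundedUnder_of_eventually_le hup'
  have hbd_ge : Filter.IsBoundedUnder (· ≥ ·) Filter.atTop ρ :=
    Filter.isBoundedUnder_of_eventually_ge hlow0
  -- tendsto of the lower bound function
  have htend : Filter.Tendsto (fun t => c * (1 - Real.exp (-(α₂ * t)))) Filter.atTop (nhds c) := by
    have h0 : Filter.Tendsto (fun t : ℝ => Real.exp (-(α₂ * t))) Filter.atTop (nhds 0) := by
      apply Real.tendsto_exp_atBot.comp
      apply Filter.tendsto_neg_atBot_iff.2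
      exact Filter.Tendsto.const_mul_atTop hα₂ Filter.tendsto_id
    have := ((tendsto_const_nhds (x := (1:ℝ))).sub h0).const_mul c
    simpa using this
  constructor
  · -- limsup part
    have h1 : c ≤ Filter.liminf ρ Filter.atTop := by
      have hgb : Filter.IsBoundedUnder (· ≥ ·) Filter.atTop
          (fun t => c * (1 - Real.exp (-(α₂ * t)))) := by
        apply Filter.isBoundedUnder_of_eventually_ge (a := (0:ℝ))
        filter_upwards [Filter.eventually_ge_atTop (0:ℝ)] with t ht
        have : Real.exp (-(α₂ * t)) ≤ 1 := Real.exp_le_one_iff.2 (by nlinarith)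
        nlinarith
      have := Filter.liminf_le_liminf hlow' hgb (hbd_le.isCoboundedUnder_ge)
      rwa [htend.liminf_eq] at this
    exact h1.trans (Filter.liminf_le_limsup hbd_le hbd_ge)
  · -- existence of tcr
    have hev : ∀ᶠ t in Filter.atTop, ρcr < c * (1 - Real.exp (-(α₂ * t))) :=
      htend.eventually_const_lt hρcr2
    obtain ⟨T, hT⟩ := (hev.and (Filter.eventually_ge_atTop (0:ℝ))).exists
    have hTpos : (0:ℝ) ≤ T := hT.2
    have hρT : ρcr < ρ T := lt_of_lt_of_le hT.1 (hlow T hT.2)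
    have hcont : ContinuousOn ρ (Icc 0 T) := by
      intro x hx
      exact ((hρ x hx.1).continuousAt).continuousWithinAt
    have hmem : ρcr ∈ Icc (ρ 0) (ρ T) := ⟨by rw [hρ0]; exact hρcr.le, hρT.le⟩
    obtain ⟨tcr, htcr_mem, htcr_eq⟩ := intermediate_value_Icc hTpos hcont hmem
    refine ⟨tcr, ?_, htcr_eq⟩
    rcases lt_or_eq_of_le htcr_mem.1 with h | h
    · exact h
    · exfalso; rw [← h, hρ0] at htcr_eq; exact absurd htcr_eq hρcr.ne
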